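/- Let s be a weak composition, T an s-decreasing tree, and (a,b) a tree ascent of T with s(a) = 0, and let Z be the s-tree rotation of T along (a,b). Then A_T(a,b) = {(b,a)}. -/
import Mathlib


open scoped Classical

/-- An `s`-decreasing tree with internal vertices `1,…,n` (the root is `n`), encoded by
recording, for each non-root internal vertex `v`, its parent `parent v` (an internal vertex
with a larger label, so that labels decrease away from the root) and the index `idx v` of
the child slot of `parent v` (among `0,…,s (parent v)`, left to right) containing `v`.
Distinct internal vertices occupy distinct child slots; all remaining slots are leaves. -/
structure SDecTree (n : ℕ) (s : ℕ → ℕ) where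
  parent : ℕ → ℕ
  idx : ℕ → ℕ
  parent_gt : ∀ v, 1 ≤ v → v < n → v < parent v
  parent_le : ∀ v, 1 ≤ v → v < n → parent v ≤ n
  idx_le : ∀ v, 1 ≤ v → v < n → idx v ≤ s (parent v)
  slot_inj : ∀ v w, 1 ≤ v → v < n → 1 ≤ w → w < n →
      parent v = parent w → idx v = idx w → v = w
  parent_out : ∀ v, v = 0 ∨ n ≤ v → parent v = 0
  idx_out : ∀ v, v = 0 ∨ n ≤ v → idx v = 0

namespace SDecTree

variable {n : ℕ} {s : ℕ → ℕ}

/-- `y` is a weak ancestor of `x`, i.e. `x` is a labeled vertex of the subtree `T^y`. -/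
def Descend (T : SDecTree n s) (x y : ℕ) : Prop :=
  ∃ k, T.parent^[k] x = y ∧ ∀ m ≤ k, 1 ≤ T.parent^[m] x ∧ T.parent^[m] x ≤ n

/-- `x` is a labeled vertex of the subtree `T^y_j` rooted at the `j`-th child of `y`. -/
def InSub (T : SDecTree n s) (y j x : ℕ) : Prop :=
  ∃ c, T.Descend x c ∧ T.parent c = y ∧ T.idx c = j

/-- `x` lies strictly left of `y` in the planar tree `T`. -/
def LeftOf (T : SDecTree n s) (x y : ℕ) : Prop :=
  ∃ z j₁ j₂, j₁ < j₂ ∧ T.InSub z j₁ x ∧ T.InSub z j₂ y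

/-- The cardinality `#_T(y,x)` of the pair `(y,x)`: it is `j` if `x ∈ T^y_j`
(so `0` if `x ∈ T^y_0` and `s y` if `x ∈ T^y_{s y}`), `0` if `x` is left of `y`, and
`s y` if `x` is right of `y`; it is `0` for out-of-range pairs. -/
noncomputable def card (T : SDecTree n s) (y x : ℕ) : ℕ :=
  if h : ∃ j, T.InSub y j x then h.choose
  else if 1 ≤ x ∧ x < y ∧ y ≤ n ∧ ¬ T.LeftOf x y then s y else 0

/-- `x` is a labeled vertex of `T^a ∖ 0`, i.e. of `T^a` with `T^a_0` replaced by a leaf. -/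
def InSubMinus0 (T : SDecTree n s) (a x : ℕ) : Prop :=
  x = a ∨ ∃ j, 0 < j ∧ T.InSub a j x

/-- `(a,b)` is a tree ascent of `T`. -/
def TreeAscent (T : SDecTree n s) (a b : ℕ) : Prop :=
  1 ≤ a ∧ a < b ∧ b ≤ n ∧
  (∃ i, i < s b ∧ T.InSub b i a) ∧
  (∀ e j, a < e → e < b → T.InSub e j a → j = s e) ∧
  (0 < s a → ∀ x, ¬ T.InSub a (s a) x)

end SDecTree

/-- A multi-inversion set (encoded by its multiplicity function) is transitive:
if `a < b < c` then `#(b,a) = 0` or `#(c,a) ≥ #(c,b)`. -/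
def IsTransitiveInv (I : ℕ → ℕ → ℕ) : Prop :=
  ∀ a b c, a < b → b < c → I b a = 0 ∨ I c b ≤ I c a

/-- The transitive closure of a multi-inversion set: the smallest (by inclusion, i.e.
pointwise on multiplicities) transitive multi-inversion set containing it. -/
noncomputable def tcInv (I : ℕ → ℕ → ℕ) : ℕ → ℕ → ℕ := fun y x =>
  sInf {m | ∃ J : ℕ → ℕ → ℕ, IsTransitiveInv J ∧ (∀ y' x', I y' x' ≤ J y' x') ∧ J y x = m}

/-- Add one copy of the inversion `(b,a)` to `I`, capping the multiplicity at `s b`. -/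
def addInv (s : ℕ → ℕ) (I : ℕ → ℕ → ℕ) (b a : ℕ) : ℕ → ℕ → ℕ := fun y x =>
  if y = b ∧ x = a then min (I y x + 1) (s y) else I y x

namespace SDecTree

variable {n : ℕ} {s : ℕ → ℕ}

/-- The `s`-weak order: `T ⪯ Z` iff `#_T(y,x) ≤ #_Z(y,x)` for all pairs. -/
def wle (T Z : SDecTree n s) : Prop := ∀ y x, T.card y x ≤ Z.card y x

/-- Strict `s`-weak order. -/
def wlt (T Z : SDecTree n s) : Prop := wle T Z ∧ ¬ wle Z T

/-- Cover relation in the `s`-weak order. -/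
def wcov (T Z : SDecTree n s) : Prop := wlt T Z ∧ ∀ U, wlt T U → wlt U Z → False

/-- `W` is the join of `T` and `Z` in the `s`-weak order. -/
def IsJoin (T Z W : SDecTree n s) : Prop :=
  wle T W ∧ wle Z W ∧ ∀ U, wle T U → wle Z U → wle W U

/-- `Z` is the `s`-tree rotation of `T` along the tree ascent `(a,b)`, i.e.
`inv Z = (inv T + (b,a))^tc`. -/
def IsRotation (T Z : SDecTree n s) (a b : ℕ) : Prop :=
  T.TreeAscent a b ∧
  ∀ y x, 1 ≤ x → x < y → y ≤ n → Z.card y x = tcInv (addInv s T.card b a) y x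

/-- The set `A_T(a,b)` of inversions added by a rotation producing `Z`: the pairs `(f,e)`
with `#_Z(f,e) > #_T(f,e)`. -/
def Aset (T Z : SDecTree n s) : Set (ℕ × ℕ) :=
  {p | T.card p.1 p.2 < Z.card p.1 p.2}

/-- The set `A_T(a,b)` described directly via the transitive closure. -/
def ARot (T : SDecTree n s) (a b : ℕ) : Set (ℕ × ℕ) :=
  {p | T.card p.1 p.2 < tcInv (addInv s T.card b a) p.1 p.2}

/-- The set `F_T(a,c)` (here `b` and `d` are the partners of `a` and `c` in the
respective tree ascents `(a,b)` and `(c,d)`): it is `{(d,e) : e ∈ T^a∖0}` if `b = c`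
and `a ∈ T^c_0`, and empty otherwise. -/
def Fset (T : SDecTree n s) (a b c d : ℕ) : Set (ℕ × ℕ) :=
  {p | b = c ∧ T.InSub c 0 a ∧ p.1 = d ∧ T.InSubMinus0 a p.2}

/-- `T` is an `s`-Tamari tree: `#_T(c,a) ≤ #_T(c,b)` whenever `a < b < c`. -/
def IsTamari (T : SDecTree n s) : Prop :=
  ∀ a b c, a < b → b < c → T.card c a ≤ T.card c b

/-- `(a,b)` is a Tamari tree ascent of `T`: `a` is a non-rightmost child of `b`. -/
def TamariAscent (T : SDecTree n s) (a b : ℕ) : Prop :=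
  1 ≤ a ∧ a < n ∧ T.parent a = b ∧ T.card b a < s b

/-- `Z` is the `s`-Tamari rotation of `T` along the Tamari tree ascent `(a,b)`. -/
def IsTamRotation (T Z : SDecTree n s) (a b : ℕ) : Prop :=
  T.TamariAscent a b ∧
  ∀ y x, 1 ≤ x → x < y → y ≤ n → Z.card y x = tcInv (addInv s T.card b a) y x

/-- Cover relation in the `s`-Tamari lattice. -/
def tamcov (T Z : SDecTree n s) : Prop :=
  IsTamari T ∧ IsTamari Z ∧ wlt T Z ∧ ∀ U, IsTamari U → wlt T U → wlt U Z → False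

/-- `W` is the join of `T` and `Z` in the `s`-Tamari lattice. -/
def IsTamJoin (T Z W : SDecTree n s) : Prop :=
  IsTamari W ∧ wle T W ∧ wle Z W ∧ ∀ U, IsTamari U → wle T U → wle Z U → wle W U

/-- The open interval `(T,Z)` in the `s`-weak order. -/
def OpenInterval (T Z : SDecTree n s) : Set (SDecTree n s) := {U | wlt T U ∧ wlt U Z}

/-- A set of trees forming a chain in the `s`-weak order. -/
def IsChainSet (C : Set (SDecTree n s)) : Prop :=
  C.Pairwise fun U V => wlt U V ∨ wlt V U

/-- The geometric realization of the order complex `Δ(T,Z)` of the open interval `(T,Z)`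
in the `s`-weak order: the space of finitely supported probability vectors on the vertex
set whose support is a chain of the open interval. -/
def orderComplex (T Z : SDecTree n s) : Set (SDecTree n s → ℝ) :=
  {f | (∀ U, 0 ≤ f U) ∧ (Function.support f).Finite ∧
    Function.support f ⊆ OpenInterval T Z ∧ IsChainSet (Function.support f) ∧
    ∑ᶠ U, f U = 1}

/-- The geometric realization of the order complex of the open interval `(T,Z)` in the
`s`-Tamari lattice. -/
def tamOrderComplex (T Z : SDecTree n s) : Set (SDecTree n s → ℝ) :=
  {f | (∀ U, 0 ≤ f U) ∧ (Function.support f).Finite ∧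
    Function.support f ⊆ {U | IsTamari U ∧ wlt T U ∧ wlt U Z} ∧
    IsChainSet (Function.support f) ∧ ∑ᶠ U, f U = 1}

end SDecTree

/-- The list of labels of the consecutive cover relations along a saturated chain,
recorded as a list of poset elements. -/
def labelsOf {α : Type*} (lab : α → α → ℕ) (L : List α) : List ℕ :=
  (L.zip L.tail).map fun p => lab p.1 p.2

namespace SDecTree

variable {n : ℕ} {s : ℕ → ℕ} (T : SDecTree n s)

lemma descend_mem {x y : ℕ} (h : T.Descend x y) :
    1 ≤ x ∧ x ≤ n ∧ 1 ≤ y ∧ y ≤ n := by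
  obtain ⟨k, hk, hv⟩ := h
  have h0 := hv 0 (Nat.zero_le k)
  have hkk := hv k le_rfl
  simp only [Function.iterate_zero_apply] at h0
  rw [hk] at hkk
  exact ⟨h0.1, h0.2, hkk.1, hkk.2⟩

lemma descend_refl {x : ℕ} (h1 : 1 ≤ x) (h2 : x ≤ n) : T.Descend x x :=
  ⟨0, rfl, fun m hm => by
    have : m = 0 := Nat.le_zero.mp hm
    subst this; simpa using ⟨h1, h2⟩⟩

lemma chain_lt {x k : ℕ}
    (hv : ∀ m ≤ k + 1, 1 ≤ T.parent^[m] x ∧ T.parent^[m] x ≤ n) :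
    T.parent^[k] x < T.parent^[k + 1] x := by
  have h1 := hv k (Nat.le_succ k)
  have h2 := hv (k + 1) le_rfl
  rw [Function.iterate_succ_apply'] at h2 ⊢
  by_cases h : T.parent^[k] x < n
  · exact T.parent_gt _ h1.1 h
  · have heq : n ≤ T.parent^[k] x := not_lt.mp h
    rw [T.parent_out _ (Or.inr heq)] at h2
    omega

lemma chain_le (x : ℕ) :
    ∀ k, (∀ m ≤ k, 1 ≤ T.parent^[m] x ∧ T.parent^[m] x ≤ n) →
      x ≤ T.parent^[k] x := by
  intro k
  induction k with
  | zero => simp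
  | succ k ih =>
    intro hv
    have h1 := ih fun m hm => hv m (hm.trans (Nat.le_succ k))
    exact le_of_lt (lt_of_le_of_lt h1 (T.chain_lt hv))

lemma descend_le {x y : ℕ} (h : T.Descend x y) : x ≤ y := by
  obtain ⟨k, hk, hv⟩ := h
  rw [← hk]
  exact T.chain_le x k hv

lemma descend_trans {x y z : ℕ} (h1 : T.Descend x y) (h2 : T.Descend y z) :
    T.Descend x z := by
  obtain ⟨k, hk, hkv⟩ := h1
  obtain ⟨l, hl, hlv⟩ := h2
  refine ⟨l + k, ?_, ?_⟩
  · rw [Function.iterate_add_apply, hk, hl]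
  · intro m hm
    by_cases h : m ≤ k
    · exact hkv m h
    · have h' : m - k ≤ l := by omega
      have := hlv (m - k) h'
      rw [← hk, ← Function.iterate_add_apply, Nat.sub_add_cancel (by omega)] at this
      exact this

lemma descend_chain {x z k l : ℕ} (hkl : k ≤ l) (hl : T.parent^[l] x = z)
    (hlv : ∀ m ≤ l, 1 ≤ T.parent^[m] x ∧ T.parent^[m] x ≤ n) :
    T.Descend (T.parent^[k] x) z := by
  refine ⟨l - k, ?_, ?_⟩
  · rw [← Function.iterate_add_apply, Nat.sub_add_cancel hkl, hl]
  · intro m hm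
    rw [← Function.iterate_add_apply]
    exact hlv (m + k) (by omega)

lemma descend_total {x y z : ℕ} (h1 : T.Descend x y) (h2 : T.Descend x z) :
    T.Descend y z ∨ T.Descend z y := by
  obtain ⟨k, hk, hkv⟩ := h1
  obtain ⟨l, hl, hlv⟩ := h2
  rcases le_total k l with h | h
  · left; rw [← hk]; exact T.descend_chain h hl hlv
  · right; rw [← hl]; exact T.descend_chain h hk hkv

lemma descend_antisymm {x y : ℕ} (h1 : T.Descend x y) (h2 : T.Descend y x) : x = y :=
  le_antisymm (T.descend_le h1) (T.descend_le h2)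

lemma descend_parent {x y : ℕ} (h : T.Descend x y) (hne : x ≠ y) :
    T.Descend (T.parent x) y := by
  obtain ⟨k, hk, hv⟩ := h
  cases k with
  | zero => simp only [Function.iterate_zero_apply] at hk; exact absurd hk hne
  | succ k =>
    refine ⟨k, ?_, ?_⟩
    · rw [← Function.iterate_succ_apply]; exact hk
    · intro m hm
      rw [← Function.iterate_succ_apply]
      exact hv (m + 1) (by omega)

lemma descend_step {x y : ℕ} (h : T.Descend x y) (hne : x ≠ y) :
    ∃ c, T.Descend x c ∧ T.parent c = y ∧ 1 ≤ c ∧ c < n := by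
  obtain ⟨k, hk, hv⟩ := h
  cases k with
  | zero => simp only [Function.iterate_zero_apply] at hk; exact absurd hk hne
  | succ k =>
    have hcn : T.parent^[k] x < n := by
      by_contra hc
      have h0 := T.parent_out _ (Or.inr (not_lt.mp hc))
      have h1 := hv (k + 1) le_rfl
      rw [Function.iterate_succ_apply', h0] at h1
      omega
    refine ⟨T.parent^[k] x, ⟨k, rfl, fun m hm => hv m (by omega)⟩, ?_, (hv k (by omega)).1, hcn⟩
    exact (Function.iterate_succ_apply' T.parent k x).symm.trans hk

lemma descend_root : ∀ x, 1 ≤ x → x ≤ n → T.Descend x n := by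
  have key : ∀ d x, 1 ≤ x → x ≤ n → n - x ≤ d → T.Descend x n := by
    intro d
    induction d with
    | zero =>
      intro x h1 h2 hd
      have : x = n := by omega
      subst this; exact T.descend_refl h1 h2
    | succ d ih =>
      intro x h1 h2 hd
      by_cases hxn : x = n
      · subst hxn; exact T.descend_refl h1 h2
      · have hlt : x < n := lt_of_le_of_ne h2 hxn
        have hp1 : x < T.parent x := T.parent_gt x h1 hlt
        have hp2 : T.parent x ≤ n := T.parent_le x h1 hlt
        have hstep : T.Descend x (T.parent x) := by
          refine ⟨1, by simp, ?_⟩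
          intro m hm
          interval_cases m
          · simpa using ⟨h1, h2⟩
          · simpa using ⟨by omega, hp2⟩
        exact T.descend_trans hstep (ih (T.parent x) (by omega) hp2 (by omega))
  intro x h1 h2; exact key (n - x) x h1 h2 le_rfl

lemma inSub_zero {y j x : ℕ} (h : T.InSub y j x) (hy : y = 0) : j = 0 := by
  obtain ⟨c, hd, hp, hi⟩ := h
  obtain ⟨_, _, hc1, hcn⟩ := T.descend_mem hd
  by_cases hc : c < n
  · have h1 := T.parent_gt c hc1 hc
    rw [hp, hy] at h1
    omega
  · rw [← hi]; exact T.idx_out c (Or.inr (not_lt.mp hc))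

lemma inSub_spec {y j x : ℕ} (h : T.InSub y j x) (hy1 : 1 ≤ y) :
    T.Descend x y ∧ y ≤ n ∧ x < y ∧ j ≤ s y := by
  obtain ⟨c, hd, hp, hi⟩ := h
  obtain ⟨hx1, hxn, hc1, hcn⟩ := T.descend_mem hd
  have hcn' : c < n := by
    by_contra hc
    have h0 := T.parent_out c (Or.inr (not_lt.mp hc))
    rw [hp] at h0; omega
  have hlt : c < T.parent c := T.parent_gt c hc1 hcn'
  have hle : T.parent c ≤ n := T.parent_le c hc1 hcn'
  have hxc : x ≤ c := T.descend_le hd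
  obtain ⟨k, hk, hv⟩ := hd
  refine ⟨⟨k + 1, ?_, ?_⟩, by omega, by omega, ?_⟩
  · rw [Function.iterate_succ_apply', hk, hp]
  · intro m hm
    rcases Nat.lt_or_ge m (k + 1) with h' | h'
    · exact hv m (by omega)
    · have hmm : m = k + 1 := by omega
      subst hmm
      rw [Function.iterate_succ_apply', hk, hp]
      omega
  · rw [← hi, ← hp]; exact T.idx_le c hc1 hcn'

lemma child_unique {x y c c' : ℕ} (hy : 1 ≤ y)
    (hd : T.Descend x c) (hp : T.parent c = y)
    (hd' : T.Descend x c') (hp' : T.parent c' = y) : c = c' := by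
  obtain ⟨_, _, hc1, hcn⟩ := T.descend_mem hd
  obtain ⟨_, _, hc1', hcn'⟩ := T.descend_mem hd'
  have hclt : c < n := by
    by_contra h; have h0 := T.parent_out c (Or.inr (not_lt.mp h)); rw [hp] at h0; omega
  have hclt' : c' < n := by
    by_contra h; have h0 := T.parent_out c' (Or.inr (not_lt.mp h)); rw [hp'] at h0; omega
  by_contra hne
  rcases T.descend_total hd hd' with h | h
  · have h2 : T.Descend y c' := by rw [← hp]; exact T.descend_parent h hne
    have h3 := T.descend_le h2
    have h4 := T.parent_gt c' hc1' hclt'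
    rw [hp'] at h4
    omega
  · have h2 : T.Descend y c := by rw [← hp']; exact T.descend_parent h (Ne.symm hne)
    have h3 := T.descend_le h2
    have h4 := T.parent_gt c hc1 hclt
    rw [hp] at h4
    omega

lemma inSub_unique {y j j' x : ℕ} (hj : T.InSub y j x) (hj' : T.InSub y j' x) :
    j = j' := by
  by_cases hy : 1 ≤ y
  · obtain ⟨c, hd, hp, hi⟩ := hj
    obtain ⟨c', hd', hp', hi'⟩ := hj'
    rw [← hi, ← hi', T.child_unique hy hd hp hd' hp']
  · rw [T.inSub_zero hj (by omega), T.inSub_zero hj' (by omega)]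

lemma inSub_of_descend {x w y j : ℕ} (h : T.Descend x w) (hw : T.InSub y j w) :
    T.InSub y j x := by
  obtain ⟨c, hd, hp, hi⟩ := hw
  exact ⟨c, T.descend_trans h hd, hp, hi⟩

lemma inSub_anc {b c z j : ℕ} (hbc : T.Descend b c) (hcz : T.Descend c z) (hne : c ≠ z)
    (h : T.InSub z j b) : T.InSub z j c := by
  obtain ⟨d, hd, hp, hi⟩ := h
  refine ⟨d, ?_, hp, hi⟩
  rcases T.descend_total hbc hd with h' | h'
  · exact h'
  · by_cases hdc : d = c
    · subst hdc
      exact T.descend_refl (T.descend_mem hd).2.2.1 (T.descend_mem hd).2.2.2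
    · exfalso
      have h2 : T.Descend (T.parent d) c := T.descend_parent h' hdc
      rw [hp] at h2
      exact hne (le_antisymm (T.descend_le hcz) (T.descend_le h2))

lemma exists_meet {x y : ℕ} (hx1 : 1 ≤ x) (hxn : x ≤ n) (hy1 : 1 ≤ y) (hyn : y ≤ n) :
    ∃ z, T.Descend x z ∧ T.Descend y z ∧
      ∀ w, T.Descend x w → T.Descend y w → T.Descend z w := by
  have hne : ({z | T.Descend x z ∧ T.Descend y z} : Set ℕ).Nonempty :=
    ⟨n, T.descend_root x hx1 hxn, T.descend_root y hy1 hyn⟩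
  have hmem := Nat.sInf_mem hne
  refine ⟨sInf {z | T.Descend x z ∧ T.Descend y z}, hmem.1, hmem.2, ?_⟩
  intro w hw1 hw2
  have hle : sInf {z | T.Descend x z ∧ T.Descend y z} ≤ w := Nat.sInf_le ⟨hw1, hw2⟩
  rcases T.descend_total hmem.1 hw1 with h | h
  · exact h
  · have heq : sInf {z | T.Descend x z ∧ T.Descend y z} = w :=
      le_antisymm hle (T.descend_le h)
    rw [heq]
    exact T.descend_refl (T.descend_mem hw1).2.2.1 (T.descend_mem hw1).2.2.2

lemma trichotomy {x y : ℕ} (hx1 : 1 ≤ x) (hxy : x < y) (hyn : y ≤ n) :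
    T.Descend x y ∨ ∃ z jx jy, jx ≠ jy ∧ T.InSub z jx x ∧ T.InSub z jy y := by
  by_cases hd : T.Descend x y
  · exact Or.inl hd
  right
  obtain ⟨z, hxz, hyz, hmin⟩ := T.exists_meet hx1 (by omega) (by omega) hyn
  have hzx : x ≠ z := by
    rintro rfl
    exact absurd (T.descend_le hyz) (by omega)
  have hzy : y ≠ z := by
    rintro rfl
    exact hd hxz
  obtain ⟨cx, hdx, hpx, hcx1, hcxn⟩ := T.descend_step hxz hzx
  obtain ⟨cy, hdy, hpy, hcy1, hcyn⟩ := T.descend_step hyz hzy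
  have hcne : cx ≠ cy := by
    rintro rfl
    have h1 := T.descend_le (hmin cx hdx hdy)
    have h2 := T.parent_gt cx hcx1 hcxn
    rw [hpx] at h2
    omega
  have hjne : T.idx cx ≠ T.idx cy := fun h =>
    hcne (T.slot_inj cx cy hcx1 hcxn hcy1 hcyn (hpx.trans hpy.symm) h)
  exact ⟨z, T.idx cx, T.idx cy, hjne, ⟨cx, hdx, hpx, rfl⟩, ⟨cy, hdy, hpy, rfl⟩⟩

lemma sep_pos {x y z jx jy : ℕ} (hx : T.InSub z jx x) (hy : T.InSub z jy y)
    (hne : jx ≠ jy) : 1 ≤ z := by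
  by_contra h
  exact hne ((T.inSub_zero hx (by omega)).trans (T.inSub_zero hy (by omega)).symm)

lemma sep_min {x y z jx jy w : ℕ} (hx : T.InSub z jx x) (hy : T.InSub z jy y)
    (hne : jx ≠ jy) (hwx : T.Descend x w) (hwy : T.Descend y w) : T.Descend z w := by
  have hz1 : 1 ≤ z := T.sep_pos hx hy hne
  have hxz := (T.inSub_spec hx hz1).1
  rcases T.descend_total hxz hwx with h | h
  · exact h
  · by_cases hwz : w = z
    · subst hwz
      exact T.descend_refl (T.descend_mem h).1 (T.descend_mem h).2.1
    · exfalso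
      obtain ⟨d, hwd, hpd, _, _⟩ := T.descend_step h hwz
      obtain ⟨cx, hdx, hpx, hix⟩ := hx
      obtain ⟨cy, hdy, hpy, hiy⟩ := hy
      have e1 : cx = d := T.child_unique hz1 hdx hpx (T.descend_trans hwx hwd) hpd
      have e2 : cy = d := T.child_unique hz1 hdy hpy (T.descend_trans hwy hwd) hpd
      exact hne (by rw [← hix, ← hiy, e1, e2])

lemma slots_eq_of_descend {x y z j1 j2 : ℕ} (hxy : T.Descend x y)
    (h1 : T.InSub z j1 x) (h2 : T.InSub z j2 y) : j1 = j2 := by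
  by_contra hne
  have hz1 : 1 ≤ z := T.sep_pos h1 h2 hne
  have hspec := T.inSub_spec h2 hz1
  have hyy : T.Descend y y :=
    T.descend_refl (T.descend_mem hxy).2.2.1 (T.descend_mem hxy).2.2.2
  have h3 := T.descend_le (T.sep_min h1 h2 hne hxy hyy)
  omega

lemma sep_unique {x y z z' jx jy jx' jy' : ℕ}
    (hx : T.InSub z jx x) (hy : T.InSub z jy y) (hne : jx ≠ jy)
    (hx' : T.InSub z' jx' x) (hy' : T.InSub z' jy' y) (hne' : jx' ≠ jy') :
    z = z' ∧ jx = jx' ∧ jy = jy' := by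
  have hz1 : 1 ≤ z := T.sep_pos hx hy hne
  have hz1' : 1 ≤ z' := T.sep_pos hx' hy' hne'
  have h1 : T.Descend z z' :=
    T.sep_min hx hy hne (T.inSub_spec hx' hz1').1 (T.inSub_spec hy' hz1').1
  have h2 : T.Descend z' z :=
    T.sep_min hx' hy' hne' (T.inSub_spec hx hz1).1 (T.inSub_spec hy hz1).1
  have hzz : z = z' := T.descend_antisymm h1 h2
  subst hzz
  exact ⟨rfl, T.inSub_unique hx hx', T.inSub_unique hy hy'⟩

lemma leftOf_iff {x y z jx jy : ℕ} (hx : T.InSub z jx x) (hy : T.InSub z jy y)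
    (hne : jx ≠ jy) : T.LeftOf x y ↔ jx < jy := by
  constructor
  · rintro ⟨z', j1, j2, hlt, h1, h2⟩
    obtain ⟨_, e1, e2⟩ := T.sep_unique h1 h2 (Nat.ne_of_lt hlt) hx hy hne
    omega
  · intro h
    exact ⟨z, jx, jy, h, hx, hy⟩

end SDecTree
namespace SDecTree

variable {n : ℕ} {s : ℕ → ℕ} (T : SDecTree n s)

lemma card_le (y x : ℕ) : T.card y x ≤ s y := by
  rw [card]
  split_ifs with h1 h2
  · obtain ⟨c, hd, hp, hi⟩ := h1.choose_spec
    obtain ⟨_, _, hc1, hcn⟩ := T.descend_mem hd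
    by_cases hc : c < n
    · rw [← hi, ← hp]; exact T.idx_le c hc1 hc
    · rw [← hi, T.idx_out c (Or.inr (not_lt.mp hc))]; omega
  · exact le_rfl
  · omega

lemma card_of_inSub {y j x : ℕ} (h : T.InSub y j x) : T.card y x = j := by
  have hex : ∃ j, T.InSub y j x := ⟨j, h⟩
  rw [card, dif_pos hex]
  exact T.inSub_unique hex.choose_spec h

lemma card_of_sep_left {x y z jx jy : ℕ} (hy1 : 1 ≤ y)
    (hx : T.InSub z jx x) (hy : T.InSub z jy y) (hlt : jx < jy) :
    T.card y x = 0 := by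
  have hne : jx ≠ jy := by omega
  have hnd : ¬ T.Descend x y := fun h => absurd (T.slots_eq_of_descend h hx hy) hne
  have hex : ¬ ∃ j, T.InSub y j x := by
    rintro ⟨j, hj⟩
    exact hnd (T.inSub_spec hj hy1).1
  rw [card, dif_neg hex, if_neg]
  exact fun h => h.2.2.2 ((T.leftOf_iff hx hy hne).mpr hlt)

lemma card_of_sep_right {x y z jx jy : ℕ} (hx1 : 1 ≤ x) (hxy : x < y) (hyn : y ≤ n)
    (hx : T.InSub z jx x) (hy : T.InSub z jy y) (hlt : jy < jx) :
    T.card y x = s y := by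
  have hne : jx ≠ jy := by omega
  have hnd : ¬ T.Descend x y := fun h => absurd (T.slots_eq_of_descend h hx hy) hne
  have hex : ¬ ∃ j, T.InSub y j x := by
    rintro ⟨j, hj⟩
    exact hnd (T.inSub_spec hj (by omega)).1
  have hnl : ¬ T.LeftOf x y := fun h => by
    rw [T.leftOf_iff hx hy hne] at h; omega
  rw [card, dif_neg hex, if_pos ⟨hx1, hxy, hyn, hnl⟩]

lemma card_out {y x : ℕ} (h : ¬ (1 ≤ x ∧ x < y ∧ y ≤ n)) : T.card y x = 0 := by
  rw [card]
  split_ifs with h1 h2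
  · have hspec := h1.choose_spec
    by_cases hy : 1 ≤ y
    · have hs := T.inSub_spec hspec hy
      have hx1 := (T.descend_mem hs.1).1
      exact absurd ⟨hx1, hs.2.2.1, hs.2.1⟩ h
    · exact T.inSub_zero hspec (by omega)
  · exact absurd ⟨h2.1, h2.2.1, h2.2.2.1⟩ h
  · rfl

theorem card_transitive : ∀ x y z, x < y → y < z →
    T.card y x = 0 ∨ T.card z y ≤ T.card z x := by
  intro x y z hxy hyz
  by_cases hx1 : 1 ≤ x
  swap
  · left; exact T.card_out (by omega)
  by_cases hzn : z ≤ n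
  swap
  · right; rw [T.card_out (y := z) (x := y) (by omega)]; omega
  by_cases h0 : T.card y x = 0
  · exact Or.inl h0
  right
  have hxy_pos : T.Descend x y ∨
      ∃ w jx jy, jy < jx ∧ T.InSub w jx x ∧ T.InSub w jy y := by
    rcases T.trichotomy hx1 hxy (by omega) with h | ⟨w, jx, jy, hne, hx', hy'⟩
    · exact Or.inl h
    · rcases Nat.lt_or_ge jx jy with hlt | hge
      · exact absurd (T.card_of_sep_left (by omega) hx' hy' hlt) h0
      · exact Or.inr ⟨w, jx, jy, by omega, hx', hy'⟩
  rcases T.trichotomy (by omega : 1 ≤ y) hyz hzn with hdyz | ⟨u, jy', jz, hneu, hyu, hzu⟩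
  · obtain ⟨d, hyd, hpd, hd1, hdn⟩ := T.descend_step hdyz (by omega)
    have hsub : T.InSub z (T.idx d) y := ⟨d, hyd, hpd, rfl⟩
    rw [T.card_of_inSub hsub]
    rcases hxy_pos with hdxy | ⟨w, jx, jy, hlt, hxw, hyw⟩
    · rw [T.card_of_inSub (T.inSub_of_descend hdxy hsub)]
    · have hw1 : 1 ≤ w := T.sep_pos hxw hyw (by omega)
      have hdyw := (T.inSub_spec hyw hw1).1
      by_cases hwez : w = z
      · subst hwez
        have he : T.idx d = jy := T.inSub_unique hsub hyw
        rw [T.card_of_inSub hxw]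
        omega
      · rcases T.descend_total hdyw hdyz with hwz | hzw
        · have h1 : T.InSub z (T.idx d) w := T.inSub_anc hdyw hwz hwez hsub
          have h2 : T.InSub z (T.idx d) x :=
            T.inSub_of_descend (T.inSub_spec hxw hw1).1 h1
          rw [T.card_of_inSub h2]
        · have hsubw : T.InSub w jy z := T.inSub_anc hdyz hzw (fun h => hwez h.symm) hyw
          rw [T.card_of_sep_right hx1 (by omega : x < z) hzn hxw hsubw hlt]
          have hle : T.idx d ≤ s z := by rw [← hpd]; exact T.idx_le d hd1 hdn
          omega
  · have hu1 : 1 ≤ u := T.sep_pos hyu hzu hneu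
    rcases Nat.lt_or_ge jy' jz with hlt | hge
    · rw [T.card_of_sep_left (by omega : 1 ≤ z) hyu hzu hlt]; omega
    · have hltu : jz < jy' := by omega
      rw [T.card_of_sep_right (by omega : 1 ≤ y) hyz hzn hyu hzu hltu]
      rcases hxy_pos with hdxy | ⟨w, jx, jy, hlt2, hxw, hyw⟩
      · have hxu : T.InSub u jy' x := T.inSub_of_descend hdxy hyu
        rw [T.card_of_sep_right hx1 (by omega : x < z) hzn hxu hzu hltu]
      · have hw1 : 1 ≤ w := T.sep_pos hxw hyw (by omega)
        have hdyw := (T.inSub_spec hyw hw1).1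
        have hdyu := (T.inSub_spec hyu hu1).1
        have hdxw := (T.inSub_spec hxw hw1).1
        by_cases hweu : w = u
        · subst hweu
          have heq : jy = jy' := T.inSub_unique hyw hyu
          rw [T.card_of_sep_right hx1 (by omega : x < z) hzn hxw hzu (by omega)]
        · rcases T.descend_total hdyw hdyu with hwu | huw
          · have h1 : T.InSub u jy' w := T.inSub_anc hdyw hwu hweu hyu
            have h2 : T.InSub u jy' x := T.inSub_of_descend hdxw h1
            rw [T.card_of_sep_right hx1 (by omega : x < z) hzn h2 hzu hltu]
          · have h1 : T.InSub w jy u := T.inSub_anc hdyu huw (fun h => hweu h.symm) hyw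
            have h2 : T.InSub w jy z :=
              T.inSub_of_descend (T.inSub_spec hzu hu1).1 h1
            rw [T.card_of_sep_right hx1 (by omega : x < z) hzn hxw h2 hlt2]

section Rotation

variable {a b i : ℕ} (h1a : 1 ≤ a) (hab : a < b) (hbn : b ≤ n)
  (hin : T.InSub b i a) (his : i < s b)

set_option linter.unusedSectionVars false

include h1a hab hbn hin his

lemma rot_ii (c : ℕ) (hbc : b < c) : T.card c b ≤ T.card c a := by
  by_cases hcn : c ≤ n
  swap
  · rw [T.card_out (y := c) (x := b) (by omega)]; omega
  have hdab : T.Descend a b := (T.inSub_spec hin (by omega)).1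
  rcases T.trichotomy (by omega : 1 ≤ b) hbc hcn with hd | ⟨z, jb, jc, hne, hbz, hcz⟩
  · obtain ⟨d, hbd, hpd, hd1, hdn⟩ := T.descend_step hd (by omega)
    have hsub : T.InSub c (T.idx d) b := ⟨d, hbd, hpd, rfl⟩
    rw [T.card_of_inSub hsub, T.card_of_inSub (T.inSub_of_descend hdab hsub)]
  · rcases Nat.lt_or_ge jb jc with hlt | hge
    · rw [T.card_of_sep_left (by omega : 1 ≤ c) hbz hcz hlt]; omega
    · have hlt' : jc < jb := by omega
      rw [T.card_of_sep_right (by omega : 1 ≤ b) hbc hcn hbz hcz hlt',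
        T.card_of_sep_right (by omega : 1 ≤ a) (by omega : a < c) hcn
          (T.inSub_of_descend hdab hbz) hcz hlt']

lemma rot_iii (y : ℕ) (hay : a < y) (hyb : y < b) :
    T.card y a = 0 ∨ T.card b y ≤ i + 1 := by
  have hdab : T.Descend a b := (T.inSub_spec hin (by omega)).1
  rcases T.trichotomy (by omega : 1 ≤ y) hyb hbn with hd | ⟨z, jy0, jb0, hne, hyz, hbz⟩
  · obtain ⟨d, hyd, hpd, hd1, hdn⟩ := T.descend_step hd (by omega)
    have hsub : T.InSub b (T.idx d) y := ⟨d, hyd, hpd, rfl⟩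
    rcases T.trichotomy h1a hay (by omega : y ≤ n) with hday | ⟨w, ja, jy', hnew, haw, hyw⟩
    · right
      rw [T.card_of_inSub hsub]
      have := T.slots_eq_of_descend hday hin hsub
      omega
    · have hw1 : 1 ≤ w := T.sep_pos haw hyw hnew
      have hdaw := (T.inSub_spec haw hw1).1
      by_cases hweb : w = b
      · subst hweb
        have e1 : ja = i := T.inSub_unique haw hin
        have e2 : jy' = T.idx d := T.inSub_unique hyw hsub
        rcases Nat.lt_or_ge ja jy' with hlt | hge
        · left
          exact T.card_of_sep_left (by omega : 1 ≤ y) haw hyw hlt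
        · right
          rw [T.card_of_inSub hsub]
          omega
      · rcases T.descend_total hdaw hdab with hwb | hbw
        · have h1 : T.InSub b i w := T.inSub_anc hdaw hwb hweb hin
          have h2 : T.InSub b i y := T.inSub_of_descend (T.inSub_spec hyw hw1).1 h1
          have he := T.inSub_unique h2 hsub
          right
          rw [T.card_of_inSub hsub]
          omega
        · exfalso
          have hmin := T.sep_min haw hyw hnew hdab hd
          exact hweb (le_antisymm (T.descend_le hmin) (T.descend_le hbw))
  · rcases Nat.lt_or_ge jy0 jb0 with hlt | hge
    · right
      rw [T.card_of_sep_left (by omega : 1 ≤ b) hyz hbz hlt]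
      omega
    · left
      have hsubz : T.InSub z jb0 a := T.inSub_of_descend hdab hbz
      exact T.card_of_sep_left (by omega : 1 ≤ y) hsubz hyz (by omega)

lemma J_transitive (hsa : s a = 0) :
    IsTransitiveInv (addInv s T.card b a) := by
  intro x y z hxy hyz
  simp only [addInv]
  by_cases h1 : y = b ∧ x = a
  · right
    rw [if_neg (show ¬(z = b ∧ y = a) by omega),
      if_neg (show ¬(z = b ∧ x = a) by omega), h1.1, h1.2]
    exact T.rot_ii h1a hab hbn hin his z (by omega)
  · by_cases h2 : z = b ∧ y = a
    · left
      rw [if_neg (show ¬(y = b ∧ x = a) by omega), h2.2]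
      have := T.card_le a x
      omega
    · by_cases h3 : z = b ∧ x = a
      · rcases T.rot_iii h1a hab hbn hin his y (by omega) (by omega) with h | h
        · left
          rw [if_neg (show ¬(y = b ∧ x = a) by omega), h3.2]
          exact h
        · right
          rw [if_neg (show ¬(z = b ∧ y = a) by omega), if_pos h3, h3.1, h3.2,
            T.card_of_inSub hin]
          have := T.card_le b y
          omega
      · rw [if_neg h1, if_neg h2, if_neg h3]
        exact T.card_transitive x y z hxy hyz

end Rotation

end SDecTree

lemma tcInv_of_transitive {I : ℕ → ℕ → ℕ} (hI : IsTransitiveInv I) (y x : ℕ) :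
    tcInv I y x = I y x := by
  have hmem : ∃ J, IsTransitiveInv J ∧ (∀ y' x', I y' x' ≤ J y' x') ∧ J y x = I y x :=
    ⟨I, hI, fun _ _ => le_rfl, rfl⟩
  apply le_antisymm (Nat.sInf_le hmem)
  apply le_csInf ⟨I y x, hmem⟩
  rintro m ⟨J, hJ, hle, rfl⟩
  exact hle y x
/-- if `(a,b)` is a tree ascent of `T` with `s a = 0` and `Z` is the
`s`-tree rotation of `T` along `(a,b)`, then `A_T(a,b) = {(b,a)}`. -/
theorem inversions_added_zero (n : ℕ) (s : ℕ → ℕ) (T Z : SDecTree n s) (a b : ℕ)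
    (hrot : SDecTree.IsRotation T Z a b) (hsa : s a = 0) :
    SDecTree.Aset T Z = {(b, a)} := by
  obtain ⟨⟨h1a, hab, hbn, ⟨i, his, hin⟩, _, _⟩, hZ⟩ := hrot
  have hJt : IsTransitiveInv (addInv s T.card b a) :=
    T.J_transitive h1a hab hbn hin his hsa
  have hcardba : T.card b a = i := T.card_of_inSub hin
  ext ⟨y, x⟩
  simp only [SDecTree.Aset, Set.mem_setOf_eq, Set.mem_singleton_iff, Prod.mk.injEq]
  constructor
  · intro h
    by_cases hr : 1 ≤ x ∧ x < y ∧ y ≤ n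
    · rw [hZ y x hr.1 hr.2.1 hr.2.2, tcInv_of_transitive hJt] at h
      by_cases he : y = b ∧ x = a
      · exact he
      · simp only [addInv, if_neg he] at h
        exact absurd h (lt_irrefl _)
    · rw [Z.card_out hr] at h
      omega
  · rintro ⟨rfl, rfl⟩
    rw [hZ y x h1a hab hbn, tcInv_of_transitive hJt]
    have he : addInv s T.card y x y x = min (T.card y x + 1) (s y) := by
      simp [addInv]
    rw [he, hcardba]
    omega
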